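/- With i a unit vector, φ = ∠(i,Qi) ∈ (0, 2π/3], j = (1/sin φ)(-cos φ·i + Qi), and w = x·i + y·j, one has f(w,w) = 2[(cos φ)x² + ((1-cos φ)(1+2cos φ)/sin φ)·xy - (cos²φ/(1+cos φ))·y²], where f(r,s) = ⟨r,Qs⟩ + ⟨Qr,s⟩. -/

import Mathlib

def Qmap (v : Fin 3 → ℝ) : Fin 3 → ℝ := ![v 1, v 2, v 0]

def gdot (v w : Fin 3 → ℝ) : ℝ := v 0 * w 0 + v 1 * w 1 + v 2 * w 2

def fform (v w : Fin 3 → ℝ) : ℝ := gdot v (Qmap w) + gdot (Qmap v) w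
theorem stmt_14 (i : Fin 3 → ℝ) (hi : gdot i i = 1) (φ : ℝ)
    (hφ0 : 0 < φ) (hφ1 : φ ≤ 2 * Real.pi / 3)
    (hcos : gdot i (Qmap i) = Real.cos φ)
    (j : Fin 3 → ℝ)
    (hj : j = (1 / Real.sin φ) • (-(Real.cos φ) • i + Qmap i))
    (x y : ℝ) (w : Fin 3 → ℝ) (hw : w = x • i + y • j) :
    fform w w = 2 * (Real.cos φ * x ^ 2 +
      ((1 - Real.cos φ) * (1 + 2 * Real.cos φ) / Real.sin φ) * (x * y) -
      (Real.cos φ ^ 2 / (1 + Real.cos φ)) * y ^ 2) := by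
  have hπ : Real.pi > 0 := Real.pi_pos
  have hφπ : φ < Real.pi := lt_of_le_of_lt hφ1 (by nlinarith)
  have hs : Real.sin φ ≠ 0 := ne_of_gt (Real.sin_pos_of_pos_of_lt_pi hφ0 hφπ)
  have hcge : Real.cos (2 * Real.pi / 3) ≤ Real.cos φ :=
    Real.cos_le_cos_of_nonneg_of_le_pi (le_of_lt hφ0) (by nlinarith) hφ1
  have hcval : Real.cos (2 * Real.pi / 3) = -(1/2) := by
    have : 2 * Real.pi / 3 = Real.pi - Real.pi / 3 := by ring
    rw [this, Real.cos_pi_sub, Real.cos_pi_div_three]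
  have hc : (1 : ℝ) + Real.cos φ ≠ 0 := by rw [hcval] at hcge; nlinarith
  have he3 : Real.sin φ ^ 2 + Real.cos φ ^ 2 = 1 := Real.sin_sq_add_cos_sq φ
  subst hw hj
  simp only [fform, gdot, Qmap, Pi.add_apply, Pi.smul_apply, Pi.neg_apply,
    Matrix.cons_val_zero, Matrix.cons_val_one, Matrix.head_cons,
    Matrix.cons_val_two, Matrix.tail_cons, smul_eq_mul] at hi hcos ⊢
  set c := Real.cos φ
  set s := Real.sin φ
  field_simp
  linear_combination (2*(1+c)*((x*s-y*c)^2 + (x*s-y*c)*y + y^2)) * hcos +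
    (2*(1+c)*(x*s-y*c)*y) * hi + (2*c^2*y^2) * he3
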